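/- Any strategy that is myopically optimal at every chain is robust: for every reachable chain H and every incentive compatible H-deviation σ', the infimum of V_d(H', σ) over best-response extensions H' of H is at least the infimum of V_d(H', σ') over all extensions H' of H. -/

import Mathlib

/-- A consistent sequence: a nonempty, strictly increasing chain beginning at `h₀`. -/
def Cons {𝓗 : Type} [Preorder 𝓗] (h₀ : 𝓗) (H : List 𝓗) : Prop :=
  H ≠ [] ∧ H.head? = some h₀ ∧ H.Chain' (· < ·)

/-- Membership in `𝓗(h₀, h)`. -/
def Memb {𝓗 : Type} [Preorder 𝓗] (h₀ h : 𝓗) (H : List 𝓗) : Prop :=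
  Cons h₀ H ∧ H.getLastD h₀ ≤ h

/-- The value to a player (with contract-value functional `V`) of the chain `H`
under strategy `σ`: the value of the contract offered at the final revelation. -/
def val {𝓗 : Type} [Preorder 𝓗] (h₀ : 𝓗) {C : 𝓗 → Type} (V : (h : 𝓗) → C h → ℝ)
    (σ : (H : List 𝓗) → C (H.getLastD h₀)) (H : List 𝓗) : ℝ :=
  V (H.getLastD h₀) (σ H)

/-- `H` is a best response to `σ` for type `h`. -/
def BRs {𝓗 : Type} [Preorder 𝓗] (h₀ : 𝓗) {C : 𝓗 → Type} (Ve : (h : 𝓗) → C h → ℝ)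
    (σ : (H : List 𝓗) → C (H.getLastD h₀)) (h : 𝓗) (H : List 𝓗) : Prop :=
  Memb h₀ h H ∧ ∀ H', Memb h₀ h H' → val h₀ Ve σ H' ≤ val h₀ Ve σ H

/-- Incentive compatibility: expert value monotone along extensions. -/
def ICs {𝓗 : Type} [Preorder 𝓗] (h₀ : 𝓗) {C : 𝓗 → Type} (Ve : (h : 𝓗) → C h → ℝ)
    (σ : (H : List 𝓗) → C (H.getLastD h₀)) : Prop :=
  ∀ H H' : List 𝓗, Cons h₀ H → H' ≠ [] → H' <+: H → val h₀ Ve σ H' ≤ val h₀ Ve σ H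

/-- `H` is reachable under `σ`: extended by some best response of some type. -/
def Reach {𝓗 : Type} [Preorder 𝓗] (h₀ : 𝓗) {C : 𝓗 → Type} (Ve : (h : 𝓗) → C h → ℝ)
    (σ : (H : List 𝓗) → C (H.getLastD h₀)) (H : List 𝓗) : Prop :=
  ∃ (h : 𝓗) (H' : List 𝓗), BRs h₀ Ve σ h H' ∧ H <+: H'

/-- `σ'` is an `H`-deviation from `σ`: it agrees with `σ` on all chains with
strictly coarser final element, and differs at `H`. -/
def Dev {𝓗 : Type} [Preorder 𝓗] (h₀ : 𝓗) {C : 𝓗 → Type}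
    (σ σ' : (H : List 𝓗) → C (H.getLastD h₀)) (H : List 𝓗) : Prop :=
  (∀ H' : List 𝓗, Cons h₀ H' → H'.getLastD h₀ < H.getLastD h₀ → σ' H' = σ H') ∧ σ' H ≠ σ H

/-- Robustness: at every reachable chain, the worst case (over best-response
extensions) of `σ` is at least the worst case (over all extensions) of any
incentive compatible `H`-deviation. -/
def Robust {𝓗 : Type} [Preorder 𝓗] (h₀ : 𝓗) {C : 𝓗 → Type} (Vd Ve : (h : 𝓗) → C h → ℝ)
    (σ : (H : List 𝓗) → C (H.getLastD h₀)) : Prop :=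
  ∀ H : List 𝓗, Cons h₀ H → Reach h₀ Ve σ H →
    ∀ σ' : (H : List 𝓗) → C (H.getLastD h₀), ICs h₀ Ve σ' → Dev h₀ σ σ' H →
      sInf {x : ℝ | ∃ H' : List 𝓗, Cons h₀ H' ∧ H <+: H' ∧ x = val h₀ Vd σ' H'} ≤
      sInf {x : ℝ | ∃ (h : 𝓗) (H' : List 𝓗), BRs h₀ Ve σ h H' ∧ H <+: H' ∧ x = val h₀ Vd σ H'}


lemma cons_step {𝓗 : Type} [Preorder 𝓗] {h₀ : 𝓗} {l : List 𝓗} {a : 𝓗}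
    (hc : Cons h₀ (l ++ [a])) (hl : l ≠ []) :
    Cons h₀ l ∧ l.getLastD h₀ < a := by
  obtain ⟨-, hh, hch⟩ := hc
  rw [List.Chain', List.isChain_append] at hch
  obtain ⟨h1, -, h3⟩ := hch
  refine ⟨⟨hl, ?_, h1⟩, ?_⟩
  · rwa [List.head?_append_of_ne_nil _ hl] at hh
  · have := h3 (l.getLast hl) (List.getLast?_eq_getLast hl ▸ rfl) a rfl
    rwa [List.getLastD_eq_getLast?, List.getLast?_eq_getLast hl]

lemma cons_dropLast {𝓗 : Type} [Preorder 𝓗] {h₀ : 𝓗} {H : List 𝓗}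
    (hc : Cons h₀ H) (hl : 2 ≤ H.length) :
    Cons h₀ H.dropLast ∧ H.dropLast.getLastD h₀ < H.getLastD h₀ := by
  have hne : H ≠ [] := hc.1
  have he : H.dropLast ++ [H.getLast hne] = H := List.dropLast_concat_getLast hne
  have hd : H.dropLast ≠ [] := by
    have := List.length_dropLast (xs := H)
    intro h; rw [h] at this; simp at this; omega
  obtain ⟨h1, h2⟩ := cons_step (l := H.dropLast) (a := H.getLast hne) (by rw [he]; exact hc) hd
  have hg : H.getLastD h₀ = H.getLast hne := by
    rw [List.getLastD_eq_getLast?, List.getLast?_eq_getLast hne]; rfl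
  exact ⟨h1, by rw [hg]; exact h2⟩

lemma cons_length {𝓗 : Type} [Fintype 𝓗] [PartialOrder 𝓗] {h₀ : 𝓗} {l : List 𝓗}
    (hc : Cons h₀ l) : l.length ≤ Fintype.card 𝓗 := by
  have hp : l.Pairwise (· < ·) := List.isChain_iff_pairwise.mp hc.2.2
  exact List.Nodup.length_le_card (hp.imp ne_of_lt)

lemma val_mono {𝓗 : Type} [PartialOrder 𝓗] (h₀ : 𝓗)
    {C : 𝓗 → Type} (Vd Ve : (h : 𝓗) → C h → ℝ)
    (pb : ∀ {h h' : 𝓗}, h ≤ h' → C h → C h')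
    (hpbd : ∀ {h h' : 𝓗} (l : h ≤ h') (c : C h), Vd h' (pb l c) = Vd h c)
    (hpbe : ∀ {h h' : 𝓗} (l : h ≤ h') (c : C h), Ve h' (pb l c) = Ve h c)
    (σ : (H : List 𝓗) → C (H.getLastD h₀))
    (hmyo : ∀ H : List 𝓗, Cons h₀ H → 2 ≤ H.length →
      Ve (H.dropLast.getLastD h₀) (σ H.dropLast) ≤ Ve (H.getLastD h₀) (σ H) ∧
      ∀ c : C (H.getLastD h₀),
        Ve (H.dropLast.getLastD h₀) (σ H.dropLast) ≤ Ve (H.getLastD h₀) c →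
        Vd (H.getLastD h₀) c ≤ Vd (H.getLastD h₀) (σ H))
    (H' t : List 𝓗) (hne : H' ≠ []) (hc : Cons h₀ (H' ++ t)) :
    val h₀ Vd σ H' ≤ val h₀ Vd σ (H' ++ t) := by
  induction t using List.reverseRecOn with
  | nil => simp
  | append_singleton t a ih =>
    rw [← List.append_assoc] at hc ⊢
    have hne' : H' ++ t ≠ [] := by simp [hne]
    obtain ⟨hc', hlt⟩ := cons_step hc hne'
    refine le_trans (ih hc') ?_
    have hlen : 2 ≤ ((H' ++ t) ++ [a]).length := by
      have : 1 ≤ (H' ++ t).length := List.length_pos_iff.mpr hne'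
      simp only [List.length_append, List.length_singleton] at this ⊢
      omega
    obtain ⟨-, hopt⟩ := hmyo ((H' ++ t) ++ [a]) hc hlen
    rw [show ((H' ++ t) ++ [a]).dropLast = H' ++ t from List.dropLast_concat] at hopt
    have hle : (H' ++ t).getLastD h₀ ≤ ((H' ++ t) ++ [a]).getLastD h₀ := by
      rw [List.getLastD_concat]; exact le_of_lt hlt
    have := hopt (pb hle (σ (H' ++ t))) (by rw [hpbe])
    rw [hpbd] at this
    exact this

/-- any strategy that is myopically optimal at every chain is robust. -/
theorem myopic_implies_robust
    {𝓗 : Type} [Fintype 𝓗] [PartialOrder 𝓗] (h₀ : 𝓗)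
    (C : 𝓗 → Type) (Vd Ve : (h : 𝓗) → C h → ℝ)
    (pb : ∀ {h h' : 𝓗}, h ≤ h' → C h → C h')
    (hpbd : ∀ {h h' : 𝓗} (l : h ≤ h') (c : C h), Vd h' (pb l c) = Vd h c)
    (hpbe : ∀ {h h' : 𝓗} (l : h ≤ h') (c : C h), Ve h' (pb l c) = Ve h c)
    (σ : (H : List 𝓗) → C (H.getLastD h₀))
    (hmyo1 : ∀ H : List 𝓗, Cons h₀ H → H.length = 1 →
      ∀ c : C (H.getLastD h₀), Vd (H.getLastD h₀) c ≤ Vd (H.getLastD h₀) (σ H))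
    (hmyo : ∀ H : List 𝓗, Cons h₀ H → 2 ≤ H.length →
      Ve (H.dropLast.getLastD h₀) (σ H.dropLast) ≤ Ve (H.getLastD h₀) (σ H) ∧
      ∀ c : C (H.getLastD h₀),
        Ve (H.dropLast.getLastD h₀) (σ H.dropLast) ≤ Ve (H.getLastD h₀) c →
        Vd (H.getLastD h₀) c ≤ Vd (H.getLastD h₀) (σ H)) :
    Robust h₀ Vd Ve σ := by
  intro H hH hReach σ' hIC hDev
  set A := {x : ℝ | ∃ H' : List 𝓗, Cons h₀ H' ∧ H <+: H' ∧ x = val h₀ Vd σ' H'} with hA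
  set B := {x : ℝ | ∃ (h : 𝓗) (H' : List 𝓗), BRs h₀ Ve σ h H' ∧ H <+: H' ∧ x = val h₀ Vd σ H'}
    with hB
  obtain ⟨h, H'', hBR, hpre⟩ := hReach
  have hBne : B.Nonempty := ⟨val h₀ Vd σ H'', h, H'', hBR, hpre, rfl⟩
  have hfin : {l : List 𝓗 | l.length ≤ Fintype.card 𝓗}.Finite := List.finite_length_le 𝓗 (Fintype.card 𝓗)
  have hAfin : A.Finite := by
    apply (hfin.image (val h₀ Vd σ')).subset
    rintro x ⟨H', hc, -, rfl⟩
    exact ⟨H', cons_length hc, rfl⟩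
  -- key step: the deviation is dominated at H itself
  have hstep : Vd (H.getLastD h₀) (σ' H) ≤ Vd (H.getLastD h₀) (σ H) := by
    rcases eq_or_lt_of_le (show 1 ≤ H.length from List.length_pos_iff.mpr hH.1) with h1 | h2
    · exact hmyo1 H hH h1.symm (σ' H)
    · have hlen : 2 ≤ H.length := h2
      obtain ⟨hd, hlt⟩ := cons_dropLast hH hlen
      have hdev := hDev.1 H.dropLast hd hlt
      have hic := hIC H H.dropLast hH hd.1 (List.dropLast_prefix H)
      simp only [val] at hic
      rw [hdev] at hic
      exact (hmyo H hH hlen).2 (σ' H) hic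
  refine le_csInf hBne ?_
  rintro b ⟨h', H'', hBR', hpre', rfl⟩
  have hmemA : val h₀ Vd σ' H ∈ A := ⟨H, hH, List.prefix_refl H, rfl⟩
  calc sInf A ≤ val h₀ Vd σ' H := csInf_le hAfin.bddBelow hmemA
    _ ≤ val h₀ Vd σ H := hstep
    _ ≤ val h₀ Vd σ H'' := by
        obtain ⟨t, rfl⟩ := hpre'
        exact val_mono h₀ Vd Ve pb hpbd hpbe σ hmyo H t hH.1 hBR'.1.1
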